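/- arXiv:1006.3447 — 4 statements merged into one kernel-verified Lean document; each statement's English description precedes it below -/
import Mathlib

section
/- Every switching class of odd order 2n−1 contains a matrix X_E such that each row of X_E has an even number of entries equal to 1. (Existence of an Eulerian representative.) -/
open Matrix Finset

/-- A symmetric matrix with zero diagonal and off-diagonal entries in `{±1}`. -/
def IsLinkingMatrix {n : ℕ} (X : Matrix (Fin n) (Fin n) ℤ) : Prop :=
  X.IsSymm ∧ (∀ i, X i i = 0) ∧ ∀ i j, i ≠ j → X i j = 1 ∨ X i j = -1

/-- Each row contains an even number of entries equal to `+1`. -/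
def IsEulerian {n : ℕ} (X : Matrix (Fin n) (Fin n) ℤ) : Prop :=
  ∀ i, Even ((Finset.univ.filter fun j : Fin n => j ≠ i ∧ X i j = 1).card)

/-- Every switching class of odd order `2n - 1` contains an Eulerian matrix: there are
a permutation `σ` and signs `d` so that the switched matrix
`(i, j) ↦ d i * d j * X (σ i) (σ j)` has an even number of `+1` entries in each row. -/
theorem exists_eulerian_representative (n : ℕ) (hn : 0 < n)
    (X : Matrix (Fin (2 * n - 1)) (Fin (2 * n - 1)) ℤ) (hX : IsLinkingMatrix X) :
    ∃ (σ : Equiv.Perm (Fin (2 * n - 1))) (d : Fin (2 * n - 1) → ℤ),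
      (∀ i, d i = 1 ∨ d i = -1) ∧
      IsEulerian (Matrix.of fun i j => d i * d j * X (σ i) (σ j)) := by
  obtain ⟨hsymm, hdiag, hpm⟩ := hX
  have hsym : ∀ i j, X j i = X i j := fun i j => hsymm.apply i j
  have hz2 : ∀ x : ZMod 2, x = 0 ∨ x = 1 := by decide
  -- the row counts
  set r : Fin (2 * n - 1) → ℕ :=
    fun i => ((univ : Finset (Fin (2 * n - 1))).filter fun j => j ≠ i ∧ X i j = 1).card with hr
  -- indicator in ZMod 2
  set a : Fin (2 * n - 1) → Fin (2 * n - 1) → ZMod 2 :=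
    fun i j => if X i j = 1 then 1 else 0 with ha
  have hasym : ∀ i j, a j i = a i j := fun i j => by rw [ha]; simp only [hsym i j]
  have hadiag : ∀ i, a i i = 0 := fun i => by simp [ha, hdiag i]
  -- r i as a sum in ZMod 2
  have hrsum : ∀ i, ((r i : ZMod 2)) = ∑ j ∈ univ.erase i, a i j := by
    intro i
    have h1 : (univ.filter fun j => j ≠ i ∧ X i j = 1)
        = (univ.erase i).filter fun j => X i j = 1 := by
      rw [← filter_ne' univ i, filter_filter]
      try simp [and_comm]
    have h2 : r i = ((univ.erase i).filter fun j => X i j = 1).card :=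
      congrArg Finset.card h1
    rw [h2, card_filter]
    push_cast
    rfl
  -- the total sum is zero
  have htotal : ∑ i, (r i : ZMod 2) = 0 := by
    have h1 : ∀ i : Fin (2 * n - 1), ∑ j ∈ univ.erase i, a i j = ∑ j, a i j := by
      intro i
      rw [← Finset.add_sum_erase univ (a i) (mem_univ i), hadiag, zero_add]
    calc ∑ i, (r i : ZMod 2) = ∑ i, ∑ j, a i j := by
          refine Finset.sum_congr rfl fun i _ => ?_
          rw [hrsum, h1]
      _ = ∑ p ∈ (univ ×ˢ univ : Finset (Fin (2*n-1) × Fin (2*n-1))), a p.1 p.2 := by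
          rw [Finset.sum_product]
      _ = 0 := by
          refine Finset.sum_ninvolution Prod.swap ?_ ?_ (fun p => mem_univ _)
            (fun p => Prod.swap_swap p)
          · intro p
            show a p.1 p.2 + a p.2 p.1 = 0
            rw [hasym p.1 p.2]
            exact CharTwo.add_self_eq_zero _
          · intro p hp h
            apply hp
            have h2 : p.2 = p.1 := congrArg Prod.fst h
            rw [h2, hadiag p.1]
  -- the signs
  refine ⟨Equiv.refl _, fun i => if (r i : ZMod 2) = 0 then 1 else -1,
    fun i => by dsimp only; split <;> simp, ?_⟩
  intro i
  set d : Fin (2 * n - 1) → ℤ := fun i => if (r i : ZMod 2) = 0 then 1 else -1 with hd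
  -- pointwise: indicator of switched entry being 1
  have hpoint : ∀ j, j ≠ i →
      ((if d i * d j * X i j = 1 then (1:ZMod 2) else 0))
        = a i j + (r i : ZMod 2) + (r j : ZMod 2) := by
    intro j hj
    rcases hz2 (r i : ZMod 2) with hi0 | hi0 <;>
      rcases hz2 (r j : ZMod 2) with hj0 | hj0 <;>
      rcases hpm i j (Ne.symm hj) with hx | hx <;>
      (simp [hd, ha, hi0, hj0, hx] <;> decide)
  -- now compute the row parity of the switched matrix
  have key : ((((univ : Finset (Fin (2*n-1))).filter fun j =>
      j ≠ i ∧ d i * d j * X i j = 1).card : ℕ) : ZMod 2) = 0 := by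
    have h1 : (univ.filter fun j => j ≠ i ∧ d i * d j * X i j = 1)
        = (univ.erase i).filter fun j => d i * d j * X i j = 1 := by
      rw [← filter_ne' univ i, filter_filter]
      try simp [and_comm]
    rw [h1, card_filter, Nat.cast_sum]
    have h2 : ∀ j ∈ univ.erase i,
        (((if d i * d j * X i j = 1 then 1 else 0 : ℕ)) : ZMod 2)
          = a i j + (r i : ZMod 2) + (r j : ZMod 2) := by
      intro j hjmem
      have hj : j ≠ i := (Finset.mem_erase.mp hjmem).1
      rw [← hpoint j hj]
      split <;> simp
    rw [Finset.sum_congr rfl h2]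
    rw [Finset.sum_add_distrib, Finset.sum_add_distrib]
    have e1 : ∑ j ∈ univ.erase i, a i j = (r i : ZMod 2) := (hrsum i).symm
    have e2 : ∑ _j ∈ univ.erase i, (r i : ZMod 2) = 0 := by
      rw [Finset.sum_const, nsmul_eq_mul]
      have hc : (univ.erase i).card = 2 * n - 1 - 1 := by
        rw [Finset.card_erase_of_mem (mem_univ i), Finset.card_univ, Fintype.card_fin]
      rw [hc]
      have : ((2 * n - 1 - 1 : ℕ) : ZMod 2) = 0 := by
        rw [ZMod.natCast_eq_zero_iff]
        exact ⟨n - 1, by omega⟩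
      rw [this, zero_mul]
    have e3 : ∑ j ∈ univ.erase i, (r j : ZMod 2) = (r i : ZMod 2) := by
      have := Finset.add_sum_erase univ (fun j => (r j : ZMod 2)) (mem_univ i)
      rw [htotal] at this
      have h4 : ∑ j ∈ univ.erase i, (r j : ZMod 2) = -(r i : ZMod 2) := by
        linear_combination this
      rw [h4, CharTwo.neg_eq]
    rw [e1, e2, e3, add_zero, CharTwo.add_self_eq_zero]
  have h2dvd : 2 ∣ ((univ : Finset (Fin (2*n-1))).filter fun j =>
      j ≠ i ∧ d i * d j * X i j = 1).card :=
    (ZMod.natCast_eq_zero_iff _ 2).mp key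
  have heven := Nat.even_iff.mpr (by omega : ((univ : Finset (Fin (2*n-1))).filter fun j =>
      j ≠ i ∧ d i * d j * X i j = 1).card % 2 = 0)
  simp only [Matrix.of_apply, Equiv.refl_apply]
  convert heven using 2
  exact Finset.filter_congr (fun _ _ => Iff.rfl)
end

section
/- Uniqueness of the Eulerian representative in odd order: if X and DXD are both Eulerian, where X is a symmetric matrix of odd order 2n−1 with zero diagonal and ±1 off-diagonal entries, and D is a diagonal matrix with diagonal entries ε_i ∈ {±1}, then D = ±Identity. -/
open Matrix Finset

lemma card_zmod2 {m : ℕ} (p : Fin m → Prop) [DecidablePred p] :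
    ((Finset.univ.filter p).card : ZMod 2) = ∑ j, if p j then (1 : ZMod 2) else 0 := by
  rw [Finset.card_filter]
  push_cast
  simp [apply_ite (Nat.cast : ℕ → ZMod 2)]

lemma even_iff_zmod2 (n : ℕ) : Even n ↔ (n : ZMod 2) = 0 := by
  rw [ZMod.natCast_eq_zero_iff, even_iff_two_dvd]

/-- Uniqueness of the Eulerian representative in odd order: if `X` and `D X D`
(entrywise `(i,j) ↦ d i * d j * X i j`) are both Eulerian, with `X` of odd order and
`d` a `±1` vector, then `d = ±(1,…,1)`, i.e. `D = ± Id`. -/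
theorem eulerian_representative_unique {m : ℕ} (hm : Odd m)
    (X : Matrix (Fin m) (Fin m) ℤ) (hX : IsLinkingMatrix X)
    (d : Fin m → ℤ) (hd : ∀ i, d i = 1 ∨ d i = -1)
    (hXE : IsEulerian X)
    (hYE : IsEulerian (Matrix.of fun i j => d i * d j * X i j)) :
    (∀ i, d i = 1) ∨ (∀ i, d i = -1) := by
  -- key: for each i, the number of j ≠ i with d j ≠ d i is even
  have key : ∀ i : Fin m,
      Even ((Finset.univ.filter fun j : Fin m => j ≠ i ∧ d j ≠ d i).card) := by
    intro i
    have h1 := (even_iff_zmod2 _).mp (hXE i)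
    have h2 := (even_iff_zmod2 _).mp (hYE i)
    rw [card_zmod2] at h1 h2
    rw [even_iff_zmod2, card_zmod2]
    have hpt : ∀ j : Fin m,
        (if j ≠ i ∧ d j ≠ d i then (1 : ZMod 2) else 0) =
        (if j ≠ i ∧ X i j = 1 then (1 : ZMod 2) else 0) +
        (if j ≠ i ∧ Matrix.of (fun i j => d i * d j * X i j) i j = 1 then (1 : ZMod 2) else 0) := by
      intro j
      by_cases hij : j = i
      · simp [hij]
      · simp only [Matrix.of_apply]
        rcases hd i with hi | hi <;> rcases hd j with hj | hj <;>
          rcases hX.2.2 i j (fun h => hij (h.symm)) with hx | hx <;>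
          simp [hij, hi, hj, hx] <;> decide
    calc (∑ j, if j ≠ i ∧ d j ≠ d i then (1 : ZMod 2) else 0)
        = (∑ j, if j ≠ i ∧ X i j = 1 then (1 : ZMod 2) else 0) +
          (∑ j, if j ≠ i ∧ Matrix.of (fun i j => d i * d j * X i j) i j = 1
            then (1 : ZMod 2) else 0) := by
          rw [← Finset.sum_add_distrib]; exact Finset.sum_congr rfl fun j _ => hpt j
      _ = 0 := by rw [h1, h2, add_zero]
  by_contra hcon
  push_neg at hcon
  obtain ⟨⟨i1, hi1⟩, ⟨i0, hi0⟩⟩ := hcon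
  have hi1' : d i1 = -1 := (hd i1).resolve_left hi1
  have hi0' : d i0 = 1 := (hd i0).resolve_right hi0
  set S := Finset.univ.filter fun j : Fin m => d j = -1 with hS
  set T := Finset.univ.filter fun j : Fin m => d j = 1 with hT
  have hST : S.card + T.card = m := by
    rw [← Finset.card_union_of_disjoint]
    · rw [show S ∪ T = Finset.univ by
        ext j; simp [hS, hT]; rcases hd j with h | h <;> simp [h]]
      simp
    · rw [Finset.disjoint_left]
      intro a ha hb
      simp [hS] at ha; simp [hT] at hb; rw [ha] at hb; norm_num at hb
  have hSe : Even S.card := by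
    have := key i0
    convert this using 2
    ext j
    simp only [hS, Finset.mem_filter, Finset.mem_univ, true_and, hi0']
    constructor
    · intro h
      refine ⟨fun hji => by rw [hji, hi0'] at h; norm_num at h, by rw [h]; norm_num⟩
    · intro ⟨_, h2⟩
      rcases hd j with h | h
      · exact absurd h h2
      · exact h
  have hTe : Even T.card := by
    have := key i1
    convert this using 2
    ext j
    simp only [hT, Finset.mem_filter, Finset.mem_univ, true_and, hi1']
    constructor
    · intro h
      refine ⟨fun hji => by rw [hji, hi1'] at h; norm_num at h, by rw [h]; norm_num⟩
    · intro ⟨_, h2⟩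
      rcases hd j with h | h
      · exact h
      · exact absurd h h2
  have : Even m := hST ▸ hSe.add hTe
  exact (Nat.not_even_iff_odd.mpr hm) this
end

section
/- Eulerian graphs of odd order 2n−1 are in bijection with switching classes of order 2n−1: the map sending an Eulerian matrix to its switching class is a bijection from the set of Eulerian matrices up to conjugation by permutation matrices onto the set of switching classes. -/
open Matrix Finset

/-- Switching equivalence, written entrywise: `Y = D Pᵀ X P D` for a permutation
matrix `P` (permutation `σ`) and a diagonal `±1` matrix `D` (diagonal `d`). -/
def SwitchingEquiv {n : ℕ} (X Y : Matrix (Fin n) (Fin n) ℤ) : Prop :=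
  ∃ (σ : Equiv.Perm (Fin n)) (d : Fin n → ℤ), (∀ i, d i = 1 ∨ d i = -1) ∧
    ∀ i j, Y i j = d i * d j * X (σ i) (σ j)

namespace EulerianAux

/-- Edge indicator in `ZMod 2`. -/
def ee {m : ℕ} (X : Matrix (Fin m) (Fin m) ℤ) (i j : Fin m) : ZMod 2 :=
  if j ≠ i ∧ X i j = 1 then 1 else 0

/-- Degree parity. -/
def par {m : ℕ} (X : Matrix (Fin m) (Fin m) ℤ) (i : Fin m) : ZMod 2 :=
  ∑ j, ee X i j

lemma zmod2_cases (x : ZMod 2) : x = 0 ∨ x = 1 := by revert x; decide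

lemma eulerian_iff {m : ℕ} (X : Matrix (Fin m) (Fin m) ℤ) :
    IsEulerian X ↔ ∀ i, par X i = 0 := by
  have key : ∀ i : Fin m,
      (((Finset.univ.filter fun j : Fin m => j ≠ i ∧ X i j = 1).card : ℕ) : ZMod 2)
        = par X i := by
    intro i
    rw [Finset.card_filter, Nat.cast_sum, par]
    refine Finset.sum_congr rfl fun j _ => ?_
    by_cases h : j ≠ i ∧ X i j = 1 <;> simp [ee, h]
  constructor
  · intro h i
    rw [← key]
    rw [ZMod.natCast_eq_zero_iff]
    exact even_iff_two_dvd.mp (h i)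
  · intro h i
    have := (h i) ▸ key i
    rw [ZMod.natCast_eq_zero_iff] at this
    exact even_iff_two_dvd.mpr this

lemma ee_symm {m : ℕ} {X : Matrix (Fin m) (Fin m) ℤ} (hs : X.IsSymm) (i j : Fin m) :
    ee X i j = ee X j i := by
  unfold ee
  rw [hs.apply j i]
  by_cases h : j = i
  · subst h; rfl
  · simp [h, Ne.symm h]

lemma handshake {m : ℕ} {X : Matrix (Fin m) (Fin m) ℤ} (hs : X.IsSymm) :
    ∑ i, par X i = 0 := by
  unfold par
  rw [← Finset.sum_product']
  refine Finset.sum_involution (fun p _ => p.swap) ?_ ?_ (fun p hp => Finset.mem_univ _) ?_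
  · intro p _
    show ee X p.1 p.2 + ee X p.2 p.1 = 0
    rw [ee_symm hs p.2 p.1, CharTwo.add_self_eq_zero]
  · intro p _ hne
    have h1 : p.1 ≠ p.2 := by
      intro h
      apply hne
      simp [ee, h]
    intro h
    apply h1
    have h2 := congrArg Prod.snd h
    simpa using h2
  · intro p _
    rfl

/-- Key parity computation: switching by `d` in odd order changes degree parity
by `s i + ∑ s j`. -/
lemma par_switch {m : ℕ} (hm : Odd m) {Z Y : Matrix (Fin m) (Fin m) ℤ}
    (hZ : ∀ i j, i ≠ j → Z i j = 1 ∨ Z i j = -1)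
    (d : Fin m → ℤ) (hd : ∀ i, d i = 1 ∨ d i = -1)
    (hY : ∀ i j, Y i j = d i * d j * Z i j) (i : Fin m) :
    par Y i = par Z i + (if d i = 1 then 0 else 1)
      + ∑ j, (if d j = 1 then (0 : ZMod 2) else 1) := by
  set s : Fin m → ZMod 2 := fun k => if d k = 1 then 0 else 1 with hsdef
  have step : ∀ j, ee Y i j = ee Z i j + (s i + s j) := by
    intro j
    by_cases hij : j = i
    · subst hij
      simp only [ee, ne_eq, not_true_eq_false, false_and, if_false]
      rw [CharTwo.add_self_eq_zero, add_zero]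
    · have hz := hZ i j (Ne.symm hij)
      have hYij := hY i j
      simp only [hsdef]
      rcases hd i with hi | hi <;> rcases hd j with hj | hj <;>
        rcases hz with hzz | hzz <;>
        simp [ee, hij, hi, hj, hzz, hYij] <;> decide
  calc par Y i = ∑ j, (ee Z i j + (s i + s j)) := Finset.sum_congr rfl fun j _ => step j
    _ = par Z i + ((m : ZMod 2) * s i + ∑ j, s j) := by
        rw [Finset.sum_add_distrib, Finset.sum_add_distrib, Finset.sum_const,
          Finset.card_univ, Fintype.card_fin, nsmul_eq_mul, par]
    _ = par Z i + s i + ∑ j, s j := by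
        have : (m : ZMod 2) = 1 := by
          obtain ⟨k, hk⟩ := hm
          subst hk
          push_cast
          ring_nf
          rw [show ((2 : ZMod 2)) = 0 from rfl]
          ring
        rw [this, one_mul, ← add_assoc]

theorem eulerian_bijection_switching_classes' (m : ℕ) (hm : Odd m) :
    (∀ X : Matrix (Fin m) (Fin m) ℤ, IsLinkingMatrix X →
      ∃ Y, IsLinkingMatrix Y ∧ IsEulerian Y ∧ SwitchingEquiv X Y) ∧
    (∀ X Y : Matrix (Fin m) (Fin m) ℤ,
      IsLinkingMatrix X → IsLinkingMatrix Y → IsEulerian X → IsEulerian Y →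
      SwitchingEquiv X Y →
      ∃ σ : Equiv.Perm (Fin m), ∀ i j, Y i j = X (σ i) (σ j)) := by
  constructor
  · -- surjectivity: switch at the set of odd-degree vertices
    intro X hX
    obtain ⟨hXs, hX0, hX1⟩ := hX
    set d : Fin m → ℤ := fun i => if par X i = 0 then 1 else -1 with hddef
    have hd : ∀ i, d i = 1 ∨ d i = -1 := by
      intro i
      by_cases h : par X i = 0 <;> simp [hddef, h]
    set Y : Matrix (Fin m) (Fin m) ℤ := Matrix.of fun i j => d i * d j * X i j with hYdef
    have hYe : ∀ i j, Y i j = d i * d j * X i j := fun i j => rfl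
    have hs_eq : ∀ k, (if d k = 1 then (0 : ZMod 2) else 1) = par X k := by
      intro k
      rcases zmod2_cases (par X k) with h | h
      · simp [hddef, h]
      · have : d k = -1 := by simp [hddef, h]
        rw [this]
        norm_num [h]
    have hlink : IsLinkingMatrix Y := by
      refine ⟨?_, ?_, ?_⟩
      · ext i j
        show Y j i = Y i j
        rw [hYe, hYe, hXs.apply i j]
        ring
      · intro i
        rw [hYe, hX0 i, mul_zero]
      · intro i j hij
        rcases hd i with h1 | h1 <;> rcases hd j with h2 | h2 <;>
          rcases hX1 i j hij with h3 | h3 <;> simp [hYe, h1, h2, h3]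
    refine ⟨Y, hlink, ?_, 1, d, hd, fun i j => by simp [hYe]⟩
    rw [eulerian_iff]
    intro i
    rw [par_switch hm hX1 d hd hYe i]
    have hT : ∑ j, (if d j = 1 then (0 : ZMod 2) else 1) = 0 := by
      rw [Finset.sum_congr rfl fun j _ => hs_eq j]
      exact handshake hXs
    rw [hT, hs_eq i, add_zero, CharTwo.add_self_eq_zero]
  · -- injectivity
    intro X Y hX hY hEX hEY hsw
    obtain ⟨σ, d, hd, h⟩ := hsw
    refine ⟨σ, fun i j => ?_⟩
    set Z : Matrix (Fin m) (Fin m) ℤ := Matrix.of fun i j => X (σ i) (σ j) with hZdef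
    have hZe : ∀ i j, Z i j = X (σ i) (σ j) := fun i j => rfl
    have hZ1 : ∀ i j, i ≠ j → Z i j = 1 ∨ Z i j = -1 := by
      intro i j hij
      exact hX.2.2 _ _ (fun hc => hij (σ.injective hc))
    have hparZ : ∀ i, par Z i = par X (σ i) := by
      intro i
      unfold par
      rw [← Equiv.sum_comp σ (ee X (σ i))]
      refine Finset.sum_congr rfl fun j _ => ?_
      unfold ee
      rw [hZe]
      congr 1
      simp [EmbeddingLike.apply_eq_iff_eq]
    have hEX' := (eulerian_iff X).mp hEX
    have hEY' := (eulerian_iff Y).mp hEY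
    have key := par_switch hm hZ1 d hd (fun i j => h i j) -- par Y i = par Z i + s i + T
    set T : ZMod 2 := ∑ j, (if d j = 1 then (0 : ZMod 2) else 1) with hTdef
    have hsT : ∀ k, (if d k = 1 then (0 : ZMod 2) else 1) = T := by
      intro k
      have := key k
      rw [hEY' k, hparZ k, hEX' (σ k), zero_add] at this
      have h2 : (if d k = 1 then (0 : ZMod 2) else 1) + T = 0 := this.symm
      have := CharTwo.add_self_eq_zero (R := ZMod 2) T
      calc (if d k = 1 then (0 : ZMod 2) else 1)
          = (if d k = 1 then (0 : ZMod 2) else 1) + T + T := by rw [add_assoc, this, add_zero]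
        _ = T := by rw [h2, zero_add]
    have hdd : d i * d j = 1 := by
      have hij := (hsT i).trans (hsT j).symm
      rcases hd i with h1 | h1 <;> rcases hd j with h2 | h2 <;>
        simp [h1, h2] at hij ⊢
    rw [h i j, hdd, one_mul]

end EulerianAux

/-- In odd order `2n - 1`, Eulerian matrices up to conjugation by permutation matrices
are in bijection with switching classes: every switching class contains an Eulerian
matrix (surjectivity), and two switching-equivalent Eulerian matrices are conjugate by
a permutation matrix (injectivity). -/
theorem eulerian_bijection_switching_classes (n : ℕ) (hn : 0 < n) :
    (∀ X : Matrix (Fin (2 * n - 1)) (Fin (2 * n - 1)) ℤ, IsLinkingMatrix X →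
      ∃ Y, IsLinkingMatrix Y ∧ IsEulerian Y ∧ SwitchingEquiv X Y) ∧
    (∀ X Y : Matrix (Fin (2 * n - 1)) (Fin (2 * n - 1)) ℤ,
      IsLinkingMatrix X → IsLinkingMatrix Y → IsEulerian X → IsEulerian Y →
      SwitchingEquiv X Y →
      ∃ σ : Equiv.Perm (Fin (2 * n - 1)), ∀ i j, Y i j = X (σ i) (σ j)) :=
  EulerianAux.eulerian_bijection_switching_classes' (2 * n - 1) ⟨n - 1, by omega⟩
end

section
/- For every even size 2n ≥ 4 there exist Eulerian matrices of both signatures: changing the signs of the entries x_{i,j} for 1 ≤ i ≠ j ≤ 3 of an Eulerian matrix of size 2n ≥ 4 yields an Eulerian matrix with opposite signature. -/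
open Matrix Finset

/-- The row sign `ε_i = (∏_{j ≠ i} x_{i,j}) · (∏_{s < t} x_{s,t})`. -/
def rowSign {m : ℕ} (X : Matrix (Fin m) (Fin m) ℤ) (i : Fin m) : ℤ :=
  (∏ j ∈ Finset.univ.filter (fun j : Fin m => j ≠ i), X i j) *
    ∏ p ∈ Finset.univ.filter (fun p : Fin m × Fin m => p.1 < p.2), X p.1 p.2

lemma prod_ite_neg {α : Type*} [DecidableEq α] (s : Finset α) (p : α → Prop)
    [DecidablePred p] (f : α → ℤ) :
    ∏ x ∈ s, (if p x then -f x else f x) = (-1) ^ (s.filter p).card * ∏ x ∈ s, f x := by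
  calc ∏ x ∈ s, (if p x then -f x else f x)
      = ∏ x ∈ s, ((if p x then (-1 : ℤ) else 1) * f x) := by
        refine Finset.prod_congr rfl fun x _ => ?_
        split <;> ring
    _ = (∏ x ∈ s, (if p x then (-1 : ℤ) else 1)) * ∏ x ∈ s, f x :=
        Finset.prod_mul_distrib
    _ = (-1) ^ (s.filter p).card * ∏ x ∈ s, f x := by
        rw [Finset.prod_ite, Finset.prod_const, Finset.prod_const, one_pow, mul_one]

/-- For every even size `2n ≥ 4`, changing the signs of the entries `x_{i,j}` with
`1 ≤ i ≠ j ≤ 3` of an Eulerian matrix (all row signs equal) yields again an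
Eulerian matrix, but with the opposite signature. -/
theorem eulerian_both_signatures {n : ℕ} (hn : 2 ≤ n)
    (X : Matrix (Fin (2 * n)) (Fin (2 * n)) ℤ)
    (hsym : X.IsSymm) (hdiag : ∀ i, X i i = 0)
    (hoff : ∀ i j, i ≠ j → X i j = 1 ∨ X i j = -1)
    (hE : ∀ i j, rowSign X i = rowSign X j) :
    ∀ Y : Matrix (Fin (2 * n)) (Fin (2 * n)) ℤ,
      (Y = Matrix.of fun (i j : Fin (2 * n)) =>
        if i ≠ j ∧ (i : ℕ) < 3 ∧ (j : ℕ) < 3 then -X i j else X i j) →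
      (Y.IsSymm ∧ (∀ i, Y i i = 0) ∧ ∀ i j, i ≠ j → Y i j = 1 ∨ Y i j = -1) ∧
      (∀ i j, rowSign Y i = rowSign Y j) ∧
      (∀ i, rowSign Y i = -rowSign X i) := by
  have h4 : 4 ≤ 2 * n := by omega
  intro Y hY
  subst hY
  -- three explicit elements
  have h0 : (0 : ℕ) < 2 * n := by omega
  have h1 : (1 : ℕ) < 2 * n := by omega
  have h2 : (2 : ℕ) < 2 * n := by omega
  set e0 : Fin (2 * n) := ⟨0, h0⟩ with he0
  set e1 : Fin (2 * n) := ⟨1, h1⟩ with he1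
  set e2 : Fin (2 * n) := ⟨2, h2⟩ with he2
  -- key: rowSign of the modified matrix
  have hkey : ∀ i, rowSign (Matrix.of fun (i j : Fin (2 * n)) =>
      if i ≠ j ∧ (i : ℕ) < 3 ∧ (j : ℕ) < 3 then -X i j else X i j) i = -rowSign X i := by
    intro i
    unfold rowSign
    simp only [Matrix.of_apply]
    rw [prod_ite_neg _ (fun j => i ≠ j ∧ (i : ℕ) < 3 ∧ (j : ℕ) < 3) (fun j => X i j),
        prod_ite_neg _ (fun p : Fin (2*n) × Fin (2*n) =>
          p.1 ≠ p.2 ∧ (p.1 : ℕ) < 3 ∧ (p.2 : ℕ) < 3) (fun p => X p.1 p.2)]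
    -- pair set has card 3
    have hB : ((Finset.univ.filter (fun p : Fin (2*n) × Fin (2*n) => p.1 < p.2)).filter
        (fun p => p.1 ≠ p.2 ∧ (p.1 : ℕ) < 3 ∧ (p.2 : ℕ) < 3))
        = ({(e0, e1), (e0, e2), (e1, e2)} : Finset (Fin (2*n) × Fin (2*n))) := by
      ext ⟨a, b⟩
      simp only [Finset.mem_filter, Finset.mem_univ, true_and, Finset.mem_insert,
        Finset.mem_singleton, Prod.mk.injEq, Fin.ext_iff, Fin.lt_def, ne_eq, he0, he1, he2]
      omega
    have hBcard : ((Finset.univ.filter (fun p : Fin (2*n) × Fin (2*n) => p.1 < p.2)).filter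
        (fun p => p.1 ≠ p.2 ∧ (p.1 : ℕ) < 3 ∧ (p.2 : ℕ) < 3)).card = 3 := by
      rw [hB]
      rw [Finset.card_insert_of_notMem, Finset.card_insert_of_notMem, Finset.card_singleton]
      · simp only [Finset.mem_singleton, Prod.mk.injEq, Fin.ext_iff, he0, he1, he2]
        omega
      · simp only [Finset.mem_insert, Finset.mem_singleton, Prod.mk.injEq, Fin.ext_iff, he0, he1, he2]
        omega
    -- row set has even card
    have hArow : ∃ k, ((Finset.univ.filter (fun j : Fin (2*n) => j ≠ i)).filter
        (fun j => i ≠ j ∧ (i : ℕ) < 3 ∧ (j : ℕ) < 3)).card = 2 * k := by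
      by_cases hi : (i : ℕ) < 3
      · refine ⟨1, ?_⟩
        have hA : ((Finset.univ.filter (fun j : Fin (2*n) => j ≠ i)).filter
            (fun j => i ≠ j ∧ (i : ℕ) < 3 ∧ (j : ℕ) < 3))
            = ({e0, e1, e2} : Finset (Fin (2*n))).erase i := by
          ext j
          simp only [Finset.mem_filter, Finset.mem_univ, true_and, Finset.mem_erase,
            Finset.mem_insert, Finset.mem_singleton, Fin.ext_iff, ne_eq, he0, he1, he2]
          omega
        rw [hA, Finset.card_erase_of_mem]
        · rw [Finset.card_insert_of_notMem, Finset.card_insert_of_notMem,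
            Finset.card_singleton]
          · simp [Fin.ext_iff, he0, he1, he2]
          · simp [Fin.ext_iff, he0, he1, he2]
        · simp only [Finset.mem_insert, Finset.mem_singleton, Fin.ext_iff, he0, he1, he2]
          omega
      · refine ⟨0, ?_⟩
        have hA : ((Finset.univ.filter (fun j : Fin (2*n) => j ≠ i)).filter
            (fun j => i ≠ j ∧ (i : ℕ) < 3 ∧ (j : ℕ) < 3)) = ∅ := by
          ext j
          simp [Finset.mem_filter]
          tauto
        rw [hA]
        simp
    obtain ⟨k, hk⟩ := hArow
    rw [hk, hBcard]
    have : ((-1 : ℤ)) ^ (2 * k) = 1 := by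
      rw [pow_mul]
      norm_num
    rw [this]
    ring
  refine ⟨⟨?_, ?_, ?_⟩, ?_, hkey⟩
  · -- symmetry
    ext i j
    simp only [Matrix.transpose_apply, Matrix.of_apply]
    have hx : X j i = X i j := hsym.apply i j
    by_cases h : i ≠ j ∧ (i : ℕ) < 3 ∧ (j : ℕ) < 3
    · rw [if_pos h, if_pos ⟨h.1.symm, h.2.2, h.2.1⟩, hx]
    · rw [if_neg h, if_neg, hx]
      intro hc
      exact h ⟨hc.1.symm, hc.2.2, hc.2.1⟩
  · intro i
    simp [hdiag]
  · intro i j hij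
    simp only [Matrix.of_apply]
    rcases hoff i j hij with h | h <;> split <;> simp [h]
  · intro i j
    rw [hkey, hkey, hE i j]
end
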